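/- arXiv:2210.16628 — 6 statements merged into one kernel-verified Lean document; each statement's English description precedes it below -/
import Mathlib

section
/- Let n ≥ 1 and let A be an n×n real matrix with positive diagonal entries (A_{ii} > 0 for all i) and nonpositive off-diagonal entries (A_{ij} ≤ 0 for all i ≠ j). Then A is a nonsingular M-matrix (i.e., A is invertible and every entry of A⁻¹ is nonnegative) if and only if there exists a vector d ∈ ℝⁿ with d_k > 0 for every k such that every entry of the vector A·d is positive (equivalently, there exists a positive diagonal matrix D such that A·D has all positive row sums). -/
open Matrix BigOperators

/-- Key lemma: under the sign conditions and existence of a positive vector `d` with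
`A.mulVec d` positive, `A.mulVec x ≥ 0` implies `x ≥ 0`. -/
lemma mmatrix_key {n : ℕ} (A : Matrix (Fin n) (Fin n) ℝ)
    (hoff : ∀ i j, i ≠ j → A i j ≤ 0)
    (d : Fin n → ℝ) (hd : ∀ k, 0 < d k) (hAd : ∀ i, 0 < A.mulVec d i)
    (x : Fin n → ℝ) (hx : ∀ i, 0 ≤ A.mulVec x i) : ∀ i, 0 ≤ x i := by
  by_contra hcon
  push_neg at hcon
  obtain ⟨i1, hi1⟩ := hcon
  have hne : (Finset.univ : Finset (Fin n)).Nonempty := ⟨i1, Finset.mem_univ _⟩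
  set t : ℝ := Finset.univ.sup' hne (fun i => -x i / d i) with ht
  obtain ⟨i0, -, hi0⟩ := Finset.exists_mem_eq_sup' hne (fun i => -x i / d i)
  have htpos : 0 < t := lt_of_lt_of_le (div_pos (neg_pos.mpr hi1) (hd i1))
    (Finset.le_sup' (fun i => -x i / d i) (Finset.mem_univ i1))
  set y : Fin n → ℝ := x + t • d with hy
  have hynn : ∀ j, 0 ≤ y j := by
    intro j
    have : -x j / d j ≤ t := Finset.le_sup' (fun i => -x i / d i) (Finset.mem_univ j)
    have := (div_le_iff₀ (hd j)).mp this
    simp only [hy, Pi.add_apply, Pi.smul_apply, smul_eq_mul]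
    linarith
  have hy0 : y i0 = 0 := by
    have : t = -x i0 / d i0 := hi0
    have hd0 := (hd i0).ne'
    simp only [hy, Pi.add_apply, Pi.smul_apply, smul_eq_mul]
    field_simp [this]
    rw [this, div_mul_cancel₀ _ hd0]; ring
  have h1 : 0 < A.mulVec y i0 := by
    have : A.mulVec y = A.mulVec x + t • A.mulVec d := by
      simp [hy, Matrix.mulVec_add, Matrix.mulVec_smul]
    rw [this]
    have := hx i0
    have := hAd i0
    simp only [Pi.add_apply, Pi.smul_apply, smul_eq_mul]
    nlinarith
  have h2 : A.mulVec y i0 ≤ 0 := by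
    rw [Matrix.mulVec, dotProduct]
    rw [← Finset.add_sum_erase _ _ (Finset.mem_univ i0)]
    rw [hy0, mul_zero, zero_add]
    apply Finset.sum_nonpos
    intro j hj
    have hji : j ≠ i0 := Finset.ne_of_mem_erase hj
    exact mul_nonpos_of_nonpos_of_nonneg (hoff i0 j (Ne.symm hji)) (hynn j)
  linarith

/-- **M-matrix characterization.** Let `A` be an `n × n` real matrix (`n ≥ 1`) with positive
diagonal entries and nonpositive off-diagonal entries. Then `A` is a nonsingular M-matrix
(invertible with entrywise nonnegative inverse) if and only if there exists a vector `d` with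
all positive entries such that every entry of `A · d` is positive (equivalently, there is a
positive diagonal matrix `D` such that `A·D` has all positive row sums). -/
theorem stmt_0 {n : ℕ} (hn : 1 ≤ n) (A : Matrix (Fin n) (Fin n) ℝ)
    (hdiag : ∀ i, 0 < A i i)
    (hoff : ∀ i j, i ≠ j → A i j ≤ 0) :
    (IsUnit A ∧ ∀ i j, 0 ≤ A⁻¹ i j) ↔
      ∃ d : Fin n → ℝ, (∀ k, 0 < d k) ∧ ∀ i, 0 < A.mulVec d i := by
  constructor
  · rintro ⟨hA, hinv⟩
    have hdet : IsUnit A.det := (Matrix.isUnit_iff_isUnit_det A).mp hA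
    refine ⟨A⁻¹.mulVec (fun _ => 1), ?_, ?_⟩
    · intro k
      have hnn : 0 ≤ A⁻¹.mulVec (fun _ => 1) k := by
        rw [Matrix.mulVec, dotProduct]
        exact Finset.sum_nonneg fun j _ => by simpa using hinv k j
      rcases hnn.lt_or_eq with h | h
      · exact h
      · exfalso
        have hsum : ∑ j : Fin n, A⁻¹ k j = 0 := by
          rw [Matrix.mulVec, dotProduct] at h
          simpa using h.symm
        have hzero : ∀ j, A⁻¹ k j = 0 := fun j =>
          (Finset.sum_eq_zero_iff_of_nonneg
            (fun j _ => hinv k j)).mp hsum j (Finset.mem_univ j)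
        have h1 : (A⁻¹ * A) k k = 1 := by rw [Matrix.nonsing_inv_mul A hdet]; simp
        rw [Matrix.mul_apply] at h1
        simp [hzero] at h1
    · intro i
      rw [Matrix.mulVec_mulVec, Matrix.mul_nonsing_inv A hdet]
      simp
  · rintro ⟨d, hd, hAd⟩
    have key := mmatrix_key A hoff d hd hAd
    have hinj : Function.Injective A.mulVec := by
      intro u v huv
      have h1 : A.mulVec (u - v) = 0 := by rw [Matrix.mulVec_sub, huv, sub_self]
      have h2 : A.mulVec (v - u) = 0 := by rw [Matrix.mulVec_sub, huv, sub_self]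
      have k1 := key (u - v) (fun i => by rw [h1]; simp)
      have k2 := key (v - u) (fun i => by rw [h2]; simp)
      funext i
      have := k1 i; have := k2 i
      simp only [Pi.sub_apply] at *
      linarith
    have hA : IsUnit A := Matrix.mulVec_injective_iff_isUnit.mp hinj
    have hdet : IsUnit A.det := (Matrix.isUnit_iff_isUnit_det A).mp hA
    refine ⟨hA, fun i j => ?_⟩
    have hx : ∀ i', 0 ≤ A.mulVec (A⁻¹.mulVec (Pi.single j 1)) i' := by
      intro i'
      rw [Matrix.mulVec_mulVec, Matrix.mul_nonsing_inv A hdet]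
      simp only [Matrix.one_mulVec, Pi.single_apply]
      split <;> norm_num
    have := key _ hx i
    rw [Matrix.mulVec, dotProduct] at this
    simpa [Pi.single_apply, Finset.sum_ite_eq', mul_comm] using this
end

section
/- Lorenz's condition: Let A be an n×n real matrix with positive diagonal entries. Write A_d for the diagonal part of A, A_a^+ for the matrix whose (i,j) entry equals A_{ij} when i ≠ j and A_{ij} > 0 and equals 0 otherwise, and A_a^- = A − A_d − A_a^+. Suppose A_a^- admits a decomposition A_a^- = A^z + A^s with A^z ≤ 0 and A^s ≤ 0 entrywise such that: (1) A_d + A^z is a nonsingular M-matrix; (2) A_a^+ ≤ A^z A_d^{-1} A^s entrywise; (3) there exists e ∈ ℝⁿ with e ≥ 0 entrywise, e ≠ 0, and A·e ≥ 0 entrywise, such that A^z or A^s connects N⁰(Ae) with N⁺(Ae). Then A is the product of two nonsingular M-matrices; in particular, A is invertible and every entry of A⁻¹ is nonnegative. -/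
open Matrix BigOperators

/-- A nonsingular M-matrix: a real square matrix with nonpositive off-diagonal entries that is
invertible and whose inverse has all entries nonnegative. -/
def IsNonsingMMatrix {n : ℕ} (B : Matrix (Fin n) (Fin n) ℝ) : Prop :=
  (∀ i j, i ≠ j → B i j ≤ 0) ∧ IsUnit B ∧ ∀ i j, 0 ≤ B⁻¹ i j

/-- The matrix `B` connects `N1` with `N2`: for every `i₀ ∈ N1` there is a directed path
`i₀ = p 0, p 1, …, p r` with `r ≥ 1`, `p r ∈ N2` and `B (p (k-1)) (p k) ≠ 0` for `k = 1,…,r`.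
In particular, if `N1 = ∅` then any matrix connects `N1` and `N2`. -/
def Connects {n : ℕ} (B : Matrix (Fin n) (Fin n) ℝ) (N1 N2 : Set (Fin n)) : Prop :=
  ∀ i0 ∈ N1, ∃ r : ℕ, 1 ≤ r ∧ ∃ p : ℕ → Fin n, p 0 = i0 ∧ p r ∈ N2 ∧
    ∀ k, k < r → B (p k) (p (k + 1)) ≠ 0

namespace Lorenz
variable {n : ℕ}

lemma mv (M : Matrix (Fin n) (Fin n) ℝ) (v : Fin n → ℝ) (i : Fin n) :
    M.mulVec v i = ∑ j, M i j * v j := by simp [Matrix.mulVec, dotProduct]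

lemma entry_pow_nonneg {C : Matrix (Fin n) (Fin n) ℝ} (hC : ∀ i j, 0 ≤ C i j) :
    ∀ (k : ℕ) (i j : Fin n), 0 ≤ (C ^ k) i j := by
  intro k
  induction k with
  | zero => intro i j; by_cases h : i = j <;> simp [Matrix.one_apply, h]
  | succ k ih =>
      intro i j
      rw [pow_succ, Matrix.mul_apply]
      exact Finset.sum_nonneg fun l _ => mul_nonneg (ih i l) (hC l j)

theorem zmat_of_pos (B : Matrix (Fin n) (Fin n) ℝ)
    (hZ : ∀ i j, i ≠ j → B i j ≤ 0)
    (z : Fin n → ℝ) (hz : ∀ i, 0 ≤ z i) (hBz : ∀ i, 0 < B.mulVec z i) :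
    IsNonsingMMatrix B := by
  rcases isEmpty_or_nonempty (Fin n) with hemp | hne
  · have hB1 : B = 1 := by ext i j; exact isEmptyElim i
    exact ⟨fun i j _ => isEmptyElim i, by rw [hB1]; exact isUnit_one, fun i j => isEmptyElim i⟩
  -- z is strictly positive
  have hzpos : ∀ i, 0 < z i := by
    intro i
    rcases (hz i).lt_or_eq with h | h
    · exact h
    · exfalso
      have hle : B.mulVec z i ≤ 0 := by
        rw [mv]
        apply Finset.sum_nonpos
        intro j _
        rcases eq_or_ne j i with rfl | hji
        · rw [← h, mul_zero]
        · exact mul_nonpos_of_nonpos_of_nonneg (hZ i j (Ne.symm hji)) (hz j)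
      exact absurd (hBz i) (not_lt.mpr hle)
  -- positive diagonal
  have hkey : ∀ i, B.mulVec z i ≤ B i i * z i := by
    intro i
    rw [mv, ← Finset.add_sum_erase Finset.univ _ (Finset.mem_univ i)]
    have : ∑ j ∈ Finset.univ.erase i, B i j * z j ≤ 0 :=
      Finset.sum_nonpos fun j hj =>
        mul_nonpos_of_nonpos_of_nonneg (hZ i j (Ne.symm (Finset.ne_of_mem_erase hj))) (hz j)
    linarith
  have hBii : ∀ i, 0 < B i i := by
    intro i
    have h1 : 0 < B i i * z i := lt_of_lt_of_le (hBz i) (hkey i)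
    by_contra hc
    push_neg at hc
    nlinarith [hzpos i]
  -- the iteration matrix
  set C : Matrix (Fin n) (Fin n) ℝ :=
    Matrix.of (fun i j => (if i = j then (1:ℝ) else 0) - (B i i)⁻¹ * B i j) with hCdef
  have hCe : ∀ i j, C i j = (if i = j then (1:ℝ) else 0) - (B i i)⁻¹ * B i j := fun i j => rfl
  have hC0 : ∀ i j, 0 ≤ C i j := by
    intro i j
    rw [hCe]
    rcases eq_or_ne i j with rfl | hij
    · rw [if_pos rfl, inv_mul_cancel₀ (ne_of_gt (hBii i))]; norm_num
    · simp only [if_neg hij]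
      have := mul_nonneg (le_of_lt (inv_pos.mpr (hBii i))) (neg_nonneg.mpr (hZ i j hij))
      linarith [this]
  have hCz : ∀ i, C.mulVec z i = z i - (B i i)⁻¹ * B.mulVec z i := by
    intro i
    rw [mv, mv]
    have : ∀ j, C i j * z j = (if i = j then z j else 0) - (B i i)⁻¹ * (B i j * z j) := by
      intro j
      rw [hCe]
      rcases eq_or_ne i j with rfl | hij
      · simp; ring
      · simp [hij]; ring
    simp only [this, Finset.sum_sub_distrib, Finset.sum_ite_eq, Finset.mem_univ, if_true,
      ← Finset.mul_sum]
  have hCzlt : ∀ i, C.mulVec z i < z i := by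
    intro i
    rw [hCz]
    have := mul_pos (inv_pos.mpr (hBii i)) (hBz i)
    linarith
  have hCz0 : ∀ i, 0 ≤ C.mulVec z i := by
    intro i
    rw [mv]
    exact Finset.sum_nonneg fun j _ => mul_nonneg (hC0 i j) (hz j)
  -- contraction factor
  set θ : ℝ := Finset.univ.sup' (Finset.univ_nonempty) (fun i => C.mulVec z i / z i) with hθdef
  have hθ0 : 0 ≤ θ := by
    obtain ⟨i⟩ := hne
    exact le_trans (div_nonneg (hCz0 i) (hz i))
      (Finset.le_sup' (fun i => C.mulVec z i / z i) (Finset.mem_univ i))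
  have hθ1 : θ < 1 := by
    rw [hθdef, Finset.sup'_lt_iff]
    intro i _
    rw [div_lt_one (hzpos i)]
    exact hCzlt i
  have hθle : ∀ i, C.mulVec z i ≤ θ * z i := by
    intro i
    have h := Finset.le_sup' (fun i => C.mulVec z i / z i) (Finset.mem_univ i)
    have h2 := mul_le_mul_of_nonneg_right h (hz i)
    rwa [div_mul_cancel₀ _ (ne_of_gt (hzpos i))] at h2
  -- geometric bound on powers
  have hpowz : ∀ (k : ℕ) (i : Fin n), ((C ^ k).mulVec z) i ≤ θ ^ k * z i := by
    intro k
    induction k with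
    | zero => intro i; simp [Matrix.one_mulVec]
    | succ k ih =>
        intro i
        have hstep : ((C ^ (k+1)).mulVec z) i = ∑ j, C i j * ((C ^ k).mulVec z) j := by
          rw [pow_succ', ← Matrix.mulVec_mulVec, mv]
        rw [hstep]
        have h1 : ∑ j, C i j * ((C ^ k).mulVec z) j ≤ ∑ j, C i j * (θ ^ k * z j) :=
          Finset.sum_le_sum fun j _ => mul_le_mul_of_nonneg_left (ih j) (hC0 i j)
        have h2 : ∑ j, C i j * (θ ^ k * z j) = θ ^ k * C.mulVec z i := by
          rw [mv, Finset.mul_sum]; congr 1; ext j; ring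
        have h3 : θ ^ k * C.mulVec z i ≤ θ ^ k * (θ * z i) :=
          mul_le_mul_of_nonneg_left (hθle i) (pow_nonneg hθ0 k)
        calc ∑ j, C i j * ((C ^ k).mulVec z) j ≤ θ ^ k * C.mulVec z i := by rw [← h2]; exact h1
        _ ≤ θ ^ (k+1) * z i := by rw [pow_succ]; linarith [h3]
  have hentry : ∀ (k : ℕ) (i j : Fin n), (C ^ k) i j ≤ θ ^ k * (z i / z j) := by
    intro k i j
    have h1 : (C ^ k) i j * z j ≤ ((C ^ k).mulVec z) i := by
      rw [mv]
      exact Finset.single_le_sum (fun l _ => mul_nonneg (entry_pow_nonneg hC0 k i l) (hz l))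
        (Finset.mem_univ j)
    have h2 : (C ^ k) i j * z j ≤ θ ^ k * z i := le_trans h1 (hpowz k i)
    rw [← mul_div_assoc, le_div_iff₀ (hzpos j)]
    exact h2
  have hsumm : ∀ i j, Summable (fun k => (C ^ k) i j) := by
    intro i j
    apply Summable.of_nonneg_of_le (fun k => entry_pow_nonneg hC0 k i j) (fun k => hentry k i j)
    exact (summable_geometric_of_lt_one hθ0 hθ1).mul_right _
  set S : Matrix (Fin n) (Fin n) ℝ := Matrix.of (fun i j => ∑' k, (C ^ k) i j) with hSdef
  have hSe : ∀ i j, S i j = ∑' k, (C ^ k) i j := fun i j => rfl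
  have hS0 : ∀ i j, 0 ≤ S i j := fun i j =>
    tsum_nonneg fun k => entry_pow_nonneg hC0 k i j
  have hCS : ∀ i j, (C * S) i j = S i j - (1 : Matrix (Fin n) (Fin n) ℝ) i j := by
    intro i j
    rw [Matrix.mul_apply]
    have h1 : ∀ l, C i l * S l j = ∑' k, C i l * (C ^ k) l j := by
      intro l; rw [hSe, tsum_mul_left]
    simp only [h1]
    rw [← Summable.tsum_finsetSum (fun l _ => (hsumm l j).mul_left _)]
    have h2 : ∀ k, ∑ l, C i l * (C ^ k) l j = (C ^ (k+1)) i j := by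
      intro k; rw [pow_succ', Matrix.mul_apply]
    simp only [h2]
    have h3 := Summable.tsum_eq_zero_add (hsumm i j)
    rw [hSe]
    have : (C ^ 0) i j = (1 : Matrix (Fin n) (Fin n) ℝ) i j := by rw [pow_zero]
    rw [← this]
    linarith [h3]
  have hSC : ∀ i j, (S * C) i j = S i j - (1 : Matrix (Fin n) (Fin n) ℝ) i j := by
    intro i j
    rw [Matrix.mul_apply]
    have h1 : ∀ l, S i l * C l j = ∑' k, (C ^ k) i l * C l j := by
      intro l; rw [hSe, tsum_mul_right]
    simp only [h1]
    rw [← Summable.tsum_finsetSum (fun l _ => (hsumm i l).mul_right _)]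
    have h2 : ∀ k, ∑ l, (C ^ k) i l * C l j = (C ^ (k+1)) i j := by
      intro k; rw [pow_succ, Matrix.mul_apply]
    simp only [h2]
    have h3 := Summable.tsum_eq_zero_add (hsumm i j)
    rw [hSe]
    have : (C ^ 0) i j = (1 : Matrix (Fin n) (Fin n) ℝ) i j := by rw [pow_zero]
    rw [← this]
    linarith [h3]
  have h1CS : (1 - C) * S = 1 := by
    ext i j
    rw [Matrix.sub_mul, Matrix.sub_apply, Matrix.one_mul, hCS]
    ring
  have hS1C : S * (1 - C) = 1 := by
    ext i j
    rw [Matrix.mul_sub, Matrix.sub_apply, Matrix.mul_one, hSC]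
    ring
  -- assemble the inverse
  set D : Matrix (Fin n) (Fin n) ℝ := Matrix.diagonal (fun i => B i i) with hD
  set Dinv : Matrix (Fin n) (Fin n) ℝ := Matrix.diagonal (fun i => (B i i)⁻¹) with hDinv
  have hDDinv : D * Dinv = 1 := by
    rw [hD, hDinv, Matrix.diagonal_mul_diagonal]
    have he : (fun i => B i i * (B i i)⁻¹) = fun _ => (1:ℝ) :=
      funext fun i => mul_inv_cancel₀ (ne_of_gt (hBii i))
    rw [he, Matrix.diagonal_one]
  have hDinvD : Dinv * D = 1 := by
    rw [hD, hDinv, Matrix.diagonal_mul_diagonal]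
    have he : (fun i => (B i i)⁻¹ * B i i) = fun _ => (1:ℝ) :=
      funext fun i => inv_mul_cancel₀ (ne_of_gt (hBii i))
    rw [he, Matrix.diagonal_one]
  have h1C : 1 - C = Dinv * B := by
    ext i j
    rw [Matrix.sub_apply, hCe, Matrix.diagonal_mul, Matrix.one_apply]
    ring
  have hBfact : B = D * (1 - C) := by
    rw [h1C, ← Matrix.mul_assoc, hDDinv, Matrix.one_mul]
  set R : Matrix (Fin n) (Fin n) ℝ := S * Dinv with hR
  have hBR : B * R = 1 := by
    rw [hBfact, hR, Matrix.mul_assoc, ← Matrix.mul_assoc (1 - C), h1CS, Matrix.one_mul, hDDinv]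
  have hRB : R * B = 1 := by
    rw [hBfact, hR, Matrix.mul_assoc, ← Matrix.mul_assoc Dinv, hDinvD, Matrix.one_mul, hS1C]
  have hUnit : IsUnit B := ⟨⟨B, R, hBR, hRB⟩, rfl⟩
  have hBinv : B⁻¹ = R := Matrix.inv_eq_right_inv hBR
  refine ⟨hZ, hUnit, ?_⟩
  intro i j
  rw [hBinv, hR, hDinv, Matrix.mul_diagonal]
  exact mul_nonneg (hS0 i j) (le_of_lt (inv_pos.mpr (hBii j)))


lemma mv' (M : Matrix (Fin n) (Fin n) ℝ) (v : Fin n → ℝ) (i : Fin n) :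
    M.mulVec v i = ∑ j, M i j * v j := by simp [Matrix.mulVec, dotProduct]

theorem exists_pos_vec (B : Matrix (Fin n) (Fin n) ℝ)
    (hZ : ∀ i j, i ≠ j → B i j ≤ 0)
    (x : Fin n → ℝ) (hx : ∀ i, 0 ≤ x i) (hy : ∀ i, 0 ≤ B.mulVec x i)
    (hconn : ∀ i, B.mulVec x i = 0 → ∃ r : ℕ, 1 ≤ r ∧ ∃ p : ℕ → Fin n, p 0 = i ∧
      0 < B.mulVec x (p r) ∧ ∀ k, k < r → B (p k) (p (k + 1)) ≠ 0) :
    ∃ z : Fin n → ℝ, (∀ i, 0 < z i) ∧ ∀ i, 0 < B.mulVec z i := by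
  classical
  rcases isEmpty_or_nonempty (Fin n) with hemp | hne
  · exact ⟨fun _ => 1, fun i => isEmptyElim i, fun i => isEmptyElim i⟩
  set y : Fin n → ℝ := B.mulVec x with hydef
  -- zero entries of x propagate along edges
  have hprop : ∀ u, x u = 0 → y u = 0 ∧ ∀ v, B u v ≠ 0 → x v = 0 := by
    intro u hu
    have hterms : ∀ v ∈ Finset.univ, B u v * x v ≤ 0 := by
      intro v _
      rcases eq_or_ne v u with rfl | hvu
      · rw [hu, mul_zero]
      · exact mul_nonpos_of_nonpos_of_nonneg (hZ u v (Ne.symm hvu)) (hx v)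
    have hy0 : y u = 0 := by
      have h1 : y u ≤ 0 := by rw [hydef, mv']; exact Finset.sum_nonpos hterms
      exact le_antisymm h1 (hy u)
    have hall : ∀ v ∈ Finset.univ, B u v * x v = 0 := by
      rw [← Finset.sum_eq_zero_iff_of_nonpos hterms]
      rw [hydef, mv'] at hy0
      exact hy0
    refine ⟨hy0, fun v hv => ?_⟩
    rcases mul_eq_zero.mp (hall v (Finset.mem_univ v)) with h | h
    · exact absurd h hv
    · exact h
  -- x is strictly positive
  have hxpos : ∀ i, 0 < x i := by
    intro i
    rcases (hx i).lt_or_eq with h | h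
    · exact h
    exfalso
    obtain ⟨r, hr1, p, hp0, hpr, hsteps⟩ := hconn i (hprop i h.symm).1
    have hzero : ∀ k, k ≤ r → x (p k) = 0 := by
      intro k
      induction k with
      | zero => intro _; rw [hp0]; exact h.symm
      | succ k ih =>
          intro hk
          have hk' : k ≤ r := Nat.le_of_succ_le hk
          exact (hprop (p k) (ih hk')).2 (p (k+1)) (hsteps k (Nat.lt_of_succ_le hk))
    have := (hprop (p r) (hzero r le_rfl)).1
    rw [← hydef] at *
    exact absurd hpr (by rw [this]; exact lt_irrefl 0)
  -- distance to the positive set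
  have hQex : ∀ i, ∃ r : ℕ, ∃ p : ℕ → Fin n, p 0 = i ∧ 0 < y (p r) ∧
      ∀ k, k < r → B (p k) (p (k + 1)) ≠ 0 := by
    intro i
    rcases (hy i).lt_or_eq with h | h
    · exact ⟨0, fun _ => i, rfl, h, fun k hk => absurd hk (Nat.not_lt_zero k)⟩
    · obtain ⟨r, _, p, hp0, hpr, hsteps⟩ := hconn i h.symm
      exact ⟨r, p, hp0, hpr, hsteps⟩
  set d : Fin n → ℕ := fun i => Nat.find (hQex i) with hddef
  have hdspec : ∀ i, ∃ p : ℕ → Fin n, p 0 = i ∧ 0 < y (p (d i)) ∧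
      ∀ k, k < d i → B (p k) (p (k + 1)) ≠ 0 := fun i => Nat.find_spec (hQex i)
  have hstep : ∀ i, y i = 0 → ∃ j, j ≠ i ∧ B i j ≠ 0 ∧ d j < d i := by
    intro i hyi
    obtain ⟨p, hp0, hpr, hsteps⟩ := hdspec i
    have hdne : d i ≠ 0 := by
      intro h0
      rw [h0, hp0] at hpr
      rw [hyi] at hpr
      exact lt_irrefl 0 hpr
    obtain ⟨m, hm⟩ := Nat.exists_eq_succ_of_ne_zero hdne
    have hyend : 0 < y (p (m + 1)) := by
      have he : p (m + 1) = p (d i) := by rw [hm]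
      rw [he]; exact hpr
    refine ⟨p 1, ?_, ?_, ?_⟩
    · intro hpi
      -- then the shifted path witnesses d i ≤ m
      have hQm : ∃ pp : ℕ → Fin n, pp 0 = i ∧ 0 < y (pp m) ∧
          ∀ k, k < m → B (pp k) (pp (k + 1)) ≠ 0 := by
        refine ⟨fun k => p (k+1), ?_, ?_, ?_⟩
        · show p (0 + 1) = i
          rw [zero_add]; exact hpi
        · exact hyend
        · intro k hk
          exact hsteps (k+1) (by omega)
      have h2 : d i ≤ m := Nat.find_min' (hQex i) hQm
      omega
    · rw [← hp0]
      exact hsteps 0 (by omega)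
    · have hQm : ∃ pp : ℕ → Fin n, pp 0 = p 1 ∧ 0 < y (pp m) ∧
          ∀ k, k < m → B (pp k) (pp (k + 1)) ≠ 0 := by
        refine ⟨fun k => p (k+1), rfl, hyend, ?_⟩
        intro k hk
        exact hsteps (k+1) (by omega)
      have h2 : d (p 1) ≤ m := Nat.find_min' (hQex (p 1)) hQm
      omega
  -- thresholds
  set K : Fin n → ℝ := fun i => ∑ k, |B i k| * x k with hKdef
  have hK0 : ∀ i, 0 ≤ K i := fun i =>
    Finset.sum_nonneg fun k _ => mul_nonneg (abs_nonneg _) (hx k)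
  set τ : Fin n → ℝ := fun i =>
    if h : y i = 0 then
      (-(B i (hstep i h).choose) * x (hstep i h).choose) / (max (B i i * x i) 0 + 1)
    else y i / (K i + 1) with hτdef
  have hτpos : ∀ i, 0 < τ i := by
    intro i
    by_cases h : y i = 0
    · show (0:ℝ) < _
      simp only [hτdef]
      rw [dif_pos h]
      obtain ⟨hne', hB, _⟩ := (hstep i h).choose_spec
      have hBlt : B i (hstep i h).choose < 0 :=
        lt_of_le_of_ne (hZ i _ (Ne.symm hne')) hB
      apply div_pos (mul_pos (by linarith) (hxpos _))
      have := le_max_right (B i i * x i) 0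
      linarith
    · show (0:ℝ) < _
      simp only [hτdef]
      rw [dif_neg h]
      have hyi : 0 < y i := lt_of_le_of_ne (hy i) (Ne.symm h)
      apply div_pos hyi (by linarith [hK0 i])
  set t : ℝ := (1/2) * min 1 (Finset.univ.inf' Finset.univ_nonempty τ) with htdef
  have hinfpos : 0 < Finset.univ.inf' Finset.univ_nonempty τ := by
    rw [Finset.lt_inf'_iff]
    intro i _
    exact hτpos i
  have ht0 : 0 < t := by
    rw [htdef]
    have := lt_min one_pos hinfpos
    linarith
  have ht1 : t < 1 := by
    rw [htdef]
    have := min_le_left 1 (Finset.univ.inf' Finset.univ_nonempty τ)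
    linarith
  have htτ : ∀ i, t < τ i := by
    intro i
    have h1 := min_le_right 1 (Finset.univ.inf' Finset.univ_nonempty τ)
    have h2 := Finset.inf'_le τ (Finset.mem_univ i)
    have := hτpos i
    rw [htdef]
    linarith
  -- the perturbed vector
  set z : Fin n → ℝ := fun k => x k * (1 - t ^ (d k + 1)) with hzdef
  have hzpos : ∀ i, 0 < z i := by
    intro i
    apply mul_pos (hxpos i)
    have := pow_lt_one₀ (le_of_lt ht0) ht1 (show d i + 1 ≠ 0 by omega)
    linarith
  refine ⟨z, hzpos, ?_⟩
  intro i
  have hexp : B.mulVec z i = y i - ∑ k, B i k * x k * t ^ (d k + 1) := by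
    rw [hydef, mv', mv', ← Finset.sum_sub_distrib]
    congr 1
    ext k
    rw [hzdef]
    ring
  rw [hexp]
  by_cases h : y i = 0
  · -- show the correction sum is negative
    rw [h]
    obtain ⟨hjne, hjB, hjd⟩ := (hstep i h).choose_spec
    set j := (hstep i h).choose
    have hBij : B i j < 0 := lt_of_le_of_ne (hZ i j (Ne.symm hjne)) hjB
    set c : ℝ := -(B i j) * x j with hcdef
    have hc : 0 < c := mul_pos (by linarith) (hxpos j)
    set Mi : ℝ := max (B i i * x i) 0 with hMidef
    have hMi0 : 0 ≤ Mi := le_max_right _ _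
    have hτi : τ i = c / (Mi + 1) := by
      simp only [hτdef]
      rw [dif_pos h]
    -- split the sum
    have hsplit : ∑ k, B i k * x k * t ^ (d k + 1) =
        B i i * x i * t ^ (d i + 1) + ∑ k ∈ Finset.univ.erase i, B i k * x k * t ^ (d k + 1) :=
      (Finset.add_sum_erase _ _ (Finset.mem_univ i)).symm
    have hjmem : j ∈ Finset.univ.erase i := Finset.mem_erase.mpr ⟨hjne, Finset.mem_univ j⟩
    have hrest : ∑ k ∈ Finset.univ.erase i, B i k * x k * t ^ (d k + 1) ≤
        B i j * x j * t ^ (d j + 1) := by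
      rw [← Finset.add_sum_erase _ _ hjmem]
      have : ∑ k ∈ (Finset.univ.erase i).erase j, B i k * x k * t ^ (d k + 1) ≤ 0 := by
        apply Finset.sum_nonpos
        intro k hk
        have hki : k ≠ i := Finset.ne_of_mem_erase (Finset.mem_of_mem_erase hk)
        apply mul_nonpos_of_nonpos_of_nonneg
        · exact mul_nonpos_of_nonpos_of_nonneg (hZ i k (Ne.symm hki)) (hx k)
        · positivity
      linarith
    have hdiagbd : B i i * x i * t ^ (d i + 1) ≤ Mi * (t * t ^ (d j + 1)) := by
      have h1 : B i i * x i * t ^ (d i + 1) ≤ Mi * t ^ (d i + 1) :=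
        mul_le_mul_of_nonneg_right (le_max_left _ _) (by positivity)
      have h2 : t ^ (d i + 1) ≤ t ^ (d j + 2) :=
        pow_le_pow_of_le_one (le_of_lt ht0) (le_of_lt ht1) (by omega)
      have h3 : t ^ (d j + 2) = t * t ^ (d j + 1) := by ring
      calc B i i * x i * t ^ (d i + 1) ≤ Mi * t ^ (d i + 1) := h1
      _ ≤ Mi * t ^ (d j + 2) := mul_le_mul_of_nonneg_left h2 hMi0
      _ = Mi * (t * t ^ (d j + 1)) := by rw [h3]
    have htMi : Mi * t < c := by
      have h1 := htτ i
      rw [hτi, lt_div_iff₀ (by linarith : (0:ℝ) < Mi + 1)] at h1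
      nlinarith [ht0]
    have hjterm : B i j * x j * t ^ (d j + 1) = -(c * t ^ (d j + 1)) := by
      rw [hcdef]; ring
    have htpow : 0 < t ^ (d j + 1) := by positivity
    have : ∑ k, B i k * x k * t ^ (d k + 1) < 0 := by
      rw [hsplit]
      have hsum : B i i * x i * t ^ (d i + 1) + ∑ k ∈ Finset.univ.erase i,
          B i k * x k * t ^ (d k + 1) ≤ Mi * (t * t ^ (d j + 1)) - c * t ^ (d j + 1) := by
        rw [hjterm] at hrest
        linarith
      have : Mi * (t * t ^ (d j + 1)) - c * t ^ (d j + 1) = (Mi * t - c) * t ^ (d j + 1) := by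
        ring
      nlinarith
    linarith
  · -- y i > 0, small correction
    have hyi : 0 < y i := lt_of_le_of_ne (hy i) (Ne.symm h)
    have hτi : τ i = y i / (K i + 1) := by
      simp only [hτdef]
      rw [dif_neg h]
    have hbd : ∑ k, B i k * x k * t ^ (d k + 1) ≤ t * K i := by
      rw [hKdef, Finset.mul_sum]
      apply Finset.sum_le_sum
      intro k _
      have h1 : B i k * x k * t ^ (d k + 1) ≤ |B i k| * x k * t ^ (d k + 1) := by
        apply mul_le_mul_of_nonneg_right _ (by positivity)
        exact mul_le_mul_of_nonneg_right (le_abs_self _) (hx k)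
      have h2 : t ^ (d k + 1) ≤ t := by
        have := pow_le_pow_of_le_one (le_of_lt ht0) (le_of_lt ht1)
          (show 1 ≤ d k + 1 by omega)
        simpa using this
      have h3 : |B i k| * x k * t ^ (d k + 1) ≤ |B i k| * x k * t :=
        mul_le_mul_of_nonneg_left h2 (mul_nonneg (abs_nonneg _) (hx k))
      calc B i k * x k * t ^ (d k + 1) ≤ |B i k| * x k * t := le_trans h1 h3
      _ = t * (|B i k| * x k) := by ring
    have htK : t * K i < y i := by
      have h1 := htτ i
      rw [hτi, lt_div_iff₀ (by linarith [hK0 i] : (0:ℝ) < K i + 1)] at h1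
      nlinarith [ht0, hK0 i]
    linarith


lemma mv2 (M : Matrix (Fin n) (Fin n) ℝ) (v : Fin n → ℝ) (i : Fin n) :
    M.mulVec v i = ∑ j, M i j * v j := by simp [Matrix.mulVec, dotProduct]

lemma entry_pow_nonneg2 {C : Matrix (Fin n) (Fin n) ℝ} (hC : ∀ i j, 0 ≤ C i j) :
    ∀ (k : ℕ) (i j : Fin n), 0 ≤ (C ^ k) i j := by
  intro k
  induction k with
  | zero => intro i j; by_cases h : i = j <;> simp [Matrix.one_apply, h]
  | succ k ih =>
      intro i j
      rw [pow_succ, Matrix.mul_apply]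
      exact Finset.sum_nonneg fun l _ => mul_nonneg (ih i l) (hC l j)

lemma entry_mul_nonneg {P Q : Matrix (Fin n) (Fin n) ℝ} (hP : ∀ i j, 0 ≤ P i j)
    (hQ : ∀ i j, 0 ≤ Q i j) : ∀ i j, 0 ≤ (P * Q) i j := by
  intro i j
  rw [Matrix.mul_apply]
  exact Finset.sum_nonneg fun l _ => mul_nonneg (hP i l) (hQ l j)

lemma mul_le_mul_left_entry {P X Y : Matrix (Fin n) (Fin n) ℝ}
    (hP : ∀ i j, 0 ≤ P i j) (h : ∀ i j, X i j ≤ Y i j) (i j : Fin n) :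
    (P * X) i j ≤ (P * Y) i j := by
  rw [Matrix.mul_apply, Matrix.mul_apply]
  exact Finset.sum_le_sum fun l _ => mul_le_mul_of_nonneg_left (h l j) (hP i l)

lemma pow_path_pos {C : Matrix (Fin n) (Fin n) ℝ} (hC : ∀ i j, 0 ≤ C i j) :
    ∀ (r : ℕ) (p : ℕ → Fin n), (∀ k, k < r → 0 < C (p k) (p (k + 1))) →
      0 < (C ^ r) (p 0) (p r) := by
  intro r
  induction r with
  | zero => intro p _; simp [Matrix.one_apply]
  | succ r ih =>
      intro p hp
      have h1 : 0 < (C ^ r) (p 1) (p (r + 1)) := by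
        have := ih (fun k => p (k + 1)) (fun k hk => hp (k + 1) (by omega))
        simpa using this
      have h2 : 0 < C (p 0) (p 1) * (C ^ r) (p 1) (p (r + 1)) :=
        mul_pos (hp 0 (by omega)) h1
      have h3 : C (p 0) (p 1) * (C ^ r) (p 1) (p (r + 1)) ≤ (C ^ (r + 1)) (p 0) (p (r + 1)) := by
        rw [pow_succ', Matrix.mul_apply]
        exact Finset.single_le_sum
          (fun l _ => mul_nonneg (hC (p 0) l) (entry_pow_nonneg2 hC r l (p (r+1))))
          (Finset.mem_univ (p 1))
      linarith

end Lorenz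


open Lorenz

/-- **Lorenz's condition.** Let `A` be an `n × n` real matrix with positive diagonal entries,
`Ad` its diagonal part, `Aap` its positive off-diagonal part, and `Aam = A - Ad - Aap` its
nonpositive off-diagonal part. Suppose `Aam = Az + As` with `Az ≤ 0`, `As ≤ 0` entrywise, where
(1) `Ad + Az` is a nonsingular M-matrix, (2) `Aap ≤ Az · Ad⁻¹ · As` entrywise, and
(3) there exists `e ≥ 0`, `e ≠ 0`, with `A·e ≥ 0` entrywise such that `Az` or `As` connects
`N⁰(Ae)` with `N⁺(Ae)`. Then `A` is the product of two nonsingular M-matrices; in particular,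
`A` is invertible and every entry of `A⁻¹` is nonnegative. -/
theorem stmt_1 {n : ℕ} (A : Matrix (Fin n) (Fin n) ℝ)
    (hdiag : ∀ i, 0 < A i i)
    (Ad Aap Aam Az As : Matrix (Fin n) (Fin n) ℝ)
    (hAd : Ad = Matrix.diagonal fun i => A i i)
    (hAap : ∀ i j, Aap i j = if i ≠ j ∧ 0 < A i j then A i j else 0)
    (hAam : Aam = A - Ad - Aap)
    (hdecomp : Aam = Az + As)
    (hAz : ∀ i j, Az i j ≤ 0) (hAs : ∀ i j, As i j ≤ 0)
    (h1 : IsNonsingMMatrix (Ad + Az))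
    (h2 : ∀ i j, Aap i j ≤ (Az * Ad⁻¹ * As) i j)
    (h3 : ∃ e : Fin n → ℝ, e ≠ 0 ∧ (∀ i, 0 ≤ e i) ∧ (∀ i, 0 ≤ A.mulVec e i) ∧
      (Connects Az {i | A.mulVec e i = 0} {i | 0 < A.mulVec e i} ∨
       Connects As {i | A.mulVec e i = 0} {i | 0 < A.mulVec e i})) :
    (∃ M1 M2 : Matrix (Fin n) (Fin n) ℝ,
        IsNonsingMMatrix M1 ∧ IsNonsingMMatrix M2 ∧ A = M1 * M2) ∧
      IsUnit A ∧ ∀ i j, 0 ≤ A⁻¹ i j := by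

  classical
  obtain ⟨hM1Z, hM1unit, hM1inv0⟩ := h1
  set M1 : Matrix (Fin n) (Fin n) ℝ := Ad + Az with hM1def
  -- diagonal inverse
  set Adinv : Matrix (Fin n) (Fin n) ℝ := Matrix.diagonal (fun i => (A i i)⁻¹) with hAdinvdef
  have hAdAdinv : Ad * Adinv = 1 := by
    rw [hAd, hAdinvdef, Matrix.diagonal_mul_diagonal]
    have he : (fun i => A i i * (A i i)⁻¹) = fun _ => (1:ℝ) :=
      funext fun i => mul_inv_cancel₀ (ne_of_gt (hdiag i))
    rw [he, Matrix.diagonal_one]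
  have hAdinvAd : Adinv * Ad = 1 := by
    rw [hAd, hAdinvdef, Matrix.diagonal_mul_diagonal]
    have he : (fun i => (A i i)⁻¹ * A i i) = fun _ => (1:ℝ) :=
      funext fun i => inv_mul_cancel₀ (ne_of_gt (hdiag i))
    rw [he, Matrix.diagonal_one]
  have hAdinv_eq : Ad⁻¹ = Adinv := Matrix.inv_eq_right_inv hAdAdinv
  have hAdinv0 : ∀ i j, 0 ≤ Adinv i j := by
    intro i j
    rw [hAdinvdef, Matrix.diagonal_apply]
    rcases eq_or_ne i j with rfl | hij
    · simp [le_of_lt (inv_pos.mpr (hdiag i))]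
    · simp [hij]
  -- diagonal entries of Az and As vanish
  have hAapdiag : ∀ i, Aap i i = 0 := by
    intro i; rw [hAap]; simp
  have hAamdiag : ∀ i, Aam i i = 0 := by
    intro i
    rw [hAam, Matrix.sub_apply, Matrix.sub_apply, hAd, Matrix.diagonal_apply_eq, hAapdiag]
    ring
  have hAzdiag : ∀ i, Az i i = 0 := by
    intro i
    have h := hAamdiag i
    rw [hdecomp, Matrix.add_apply] at h
    have := hAz i i; have := hAs i i
    linarith
  have hAsdiag : ∀ i, As i i = 0 := by
    intro i
    have h := hAamdiag i
    rw [hdecomp, Matrix.add_apply] at h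
    have := hAz i i; have := hAs i i
    linarith
  -- inverse facts for M1
  have hM1det : IsUnit M1.det := (Matrix.isUnit_iff_isUnit_det M1).mp hM1unit
  have hM1invM1 : M1⁻¹ * M1 = 1 := Matrix.nonsing_inv_mul M1 hM1det
  have hM1M1inv : M1 * M1⁻¹ = 1 := Matrix.mul_nonsing_inv M1 hM1det
  -- T = M1⁻¹ * Ad and the comparison matrix C
  set T : Matrix (Fin n) (Fin n) ℝ := M1⁻¹ * Ad with hTdef
  have hT0 : ∀ i j, 0 ≤ T i j := by
    intro i j
    rw [hTdef, hAd, Matrix.mul_diagonal]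
    exact mul_nonneg (hM1inv0 i j) (le_of_lt (hdiag j))
  set Cm : Matrix (Fin n) (Fin n) ℝ := -(Adinv * Az) with hCmdef
  have hCm0 : ∀ i j, 0 ≤ Cm i j := by
    intro i j
    rw [hCmdef, Matrix.neg_apply, hAdinvdef, Matrix.diagonal_mul]
    have := mul_nonpos_of_nonneg_of_nonpos (le_of_lt (inv_pos.mpr (hdiag i))) (hAz i j)
    linarith
  have hCmentry : ∀ i j, Az i j ≠ 0 → 0 < Cm i j := by
    intro i j hij
    rw [hCmdef, Matrix.neg_apply, hAdinvdef, Matrix.diagonal_mul]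
    have h := lt_of_le_of_ne (hAz i j) hij
    have := mul_pos (inv_pos.mpr (hdiag i)) (neg_pos.mpr h)
    linarith
  have hAdinvM1 : Adinv * M1 = 1 - Cm := by
    rw [hM1def, hCmdef, Matrix.mul_add, hAdinvAd, sub_neg_eq_add]
  have h1CmT : (1 - Cm) * T = 1 := by
    rw [← hAdinvM1, hTdef, Matrix.mul_assoc, ← Matrix.mul_assoc M1, hM1M1inv, Matrix.one_mul,
      hAdinvAd]
  have hT1Cm : T * (1 - Cm) = 1 := by
    rw [← hAdinvM1, hTdef, Matrix.mul_assoc, ← Matrix.mul_assoc Ad, hAdAdinv, Matrix.one_mul,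
      hM1invM1]
  have hsub : T - Cm * T = 1 := by
    have h := h1CmT
    rw [Matrix.sub_mul, Matrix.one_mul] at h
    exact h
  have hTCT : T = 1 + Cm * T := by rw [← hsub]; abel
  have hCmT_eq : Cm * T = T - 1 := by rw [← hsub]; abel
  have hT_ge_one : ∀ i j, (1 : Matrix (Fin n) (Fin n) ℝ) i j ≤ T i j := by
    intro i j
    rw [hTCT, Matrix.add_apply]
    have := entry_mul_nonneg hCm0 hT0 i j
    linarith
  have hone0 : ∀ i j, (0:ℝ) ≤ (1 : Matrix (Fin n) (Fin n) ℝ) i j := by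
    intro i j
    rcases eq_or_ne i j with rfl | hij
    · simp [Matrix.one_apply]
    · simp [Matrix.one_apply_ne hij]
  -- T dominates every power of Cm
  have hCmT_le : ∀ (m : ℕ) (i j : Fin n), (Cm ^ m * T) i j ≤ T i j := by
    intro m
    induction m with
    | zero => intro i j; rw [pow_zero, Matrix.one_mul]
    | succ m ih =>
        intro i j
        have hrw : Cm ^ (m + 1) * T = Cm * (Cm ^ m * T) := by
          rw [pow_succ', Matrix.mul_assoc]
        rw [hrw]
        have h1 : (Cm * (Cm ^ m * T)) i j ≤ (Cm * T) i j :=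
          mul_le_mul_left_entry hCm0 ih i j
        rw [hCmT_eq, Matrix.sub_apply] at h1
        have := hone0 i j
        linarith
  have hT_ge_pow : ∀ (m : ℕ) (i j : Fin n), (Cm ^ m) i j ≤ T i j := by
    intro m i j
    have h1 : (Cm ^ m) i j ≤ (Cm ^ m * T) i j := by
      have heq : (Cm ^ m) i j = ∑ l, (Cm ^ m) i l * (1 : Matrix (Fin n) (Fin n) ℝ) l j := by
        rw [← Matrix.mul_apply, Matrix.mul_one]
      rw [heq, Matrix.mul_apply]
      exact Finset.sum_le_sum fun l _ =>
        mul_le_mul_of_nonneg_left (hT_ge_one l j) (entry_pow_nonneg2 hCm0 m i l)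
    exact le_trans h1 (hCmT_le m i j)
  have hM1inv_eq_TAdinv : M1⁻¹ = T * Adinv := by
    rw [hTdef, Matrix.mul_assoc, hAdAdinv, Matrix.mul_one]
  have hM1inv_ge : ∀ (m : ℕ) (i j : Fin n), (Cm ^ m) i j * (A j j)⁻¹ ≤ M1⁻¹ i j := by
    intro m i j
    rw [hM1inv_eq_TAdinv, hAdinvdef, Matrix.mul_diagonal]
    exact mul_le_mul_of_nonneg_right (hT_ge_pow m i j) (le_of_lt (inv_pos.mpr (hdiag j)))
  have hM1inv_diag : ∀ i, (A i i)⁻¹ ≤ M1⁻¹ i i := by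
    intro i
    have := hM1inv_ge 0 i i
    rw [pow_zero, Matrix.one_apply_eq, one_mul] at this
    exact this
  -- the second factor
  set M2 : Matrix (Fin n) (Fin n) ℝ := M1⁻¹ * A with hM2def
  have hAsplit : A = M1 + (Aap + As) := by
    have h : Az + As = A - Ad - Aap := by rw [← hdecomp, hAam]
    ext i j
    have h' := congrFun (congrFun h i) j
    simp only [Matrix.add_apply, Matrix.sub_apply, hM1def] at h' ⊢
    linarith
  have hM2eq : M2 = 1 + M1⁻¹ * (Aap + As) := by
    rw [hM2def]
    conv_lhs => rw [hAsplit]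
    rw [Matrix.mul_add, hM1invM1]
  -- entrywise bound M2 ≤ 1 + Adinv * As
  have hAzfact : Az = M1 - Ad := by rw [hM1def]; abel
  have hM1invAz : M1⁻¹ * Az = 1 - T := by
    rw [hAzfact, Matrix.mul_sub, hM1invM1, hTdef]
  have hkey_eq : M1⁻¹ * (Az * Ad⁻¹ * As) = Adinv * As - M1⁻¹ * As := by
    rw [hAdinv_eq]
    have h : Az * Adinv * As = Az * (Adinv * As) := by rw [Matrix.mul_assoc]
    rw [h, ← Matrix.mul_assoc, hM1invAz, Matrix.sub_mul, Matrix.one_mul, hM1inv_eq_TAdinv,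
      Matrix.mul_assoc, ← Matrix.mul_assoc M1⁻¹ Ad, ← hTdef, ← Matrix.mul_assoc]
  have hM2le : ∀ i j, M2 i j ≤ (1 : Matrix (Fin n) (Fin n) ℝ) i j + (Adinv * As) i j := by
    intro i j
    rw [hM2eq, Matrix.add_apply]
    have h1 : (M1⁻¹ * (Aap + As)) i j = (M1⁻¹ * Aap) i j + (M1⁻¹ * As) i j := by
      rw [Matrix.mul_add, Matrix.add_apply]
    have h2 : (M1⁻¹ * Aap) i j ≤ (M1⁻¹ * (Az * Ad⁻¹ * As)) i j :=
      mul_le_mul_left_entry hM1inv0 h2 i j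
    rw [hkey_eq, Matrix.sub_apply] at h2
    linarith
  have hM2Z : ∀ i j, i ≠ j → M2 i j ≤ 0 := by
    intro i j hij
    have h := hM2le i j
    rw [Matrix.one_apply_ne hij, hAdinvdef, Matrix.diagonal_mul] at h
    have := mul_nonpos_of_nonneg_of_nonpos (le_of_lt (inv_pos.mpr (hdiag i))) (hAs i j)
    linarith
  have hM2lt : ∀ i j, i ≠ j → As i j ≠ 0 → M2 i j < 0 := by
    intro i j hij hAsij
    have h := hM2le i j
    rw [Matrix.one_apply_ne hij, hAdinvdef, Matrix.diagonal_mul] at h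
    have hlt : As i j < 0 := lt_of_le_of_ne (hAs i j) hAsij
    have := mul_neg_of_pos_of_neg (inv_pos.mpr (hdiag i)) hlt
    linarith
  -- vector estimates
  obtain ⟨e, hene, he0, hAe0, hor⟩ := h3
  set y : Fin n → ℝ := A.mulVec e with hydef
  have hM2e : M2.mulVec e = M1⁻¹.mulVec y := by
    rw [hM2def, hydef, ← Matrix.mulVec_mulVec]
  have hM2e_ge : ∀ i j, M1⁻¹ i j * y j ≤ M2.mulVec e i := by
    intro i j
    rw [hM2e, mv2]
    exact Finset.single_le_sum
      (fun l _ => mul_nonneg (hM1inv0 i l) (hAe0 l)) (Finset.mem_univ j)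
  have hM2e0 : ∀ i, 0 ≤ M2.mulVec e i := by
    intro i
    rw [hM2e, mv2]
    exact Finset.sum_nonneg fun l _ => mul_nonneg (hM1inv0 i l) (hAe0 l)
  have hNplus : ∀ i, 0 < y i → 0 < M2.mulVec e i := by
    intro i hyi
    have h1 := hM2e_ge i i
    have h2 : 0 < M1⁻¹ i i * y i :=
      mul_pos (lt_of_lt_of_le (inv_pos.mpr (hdiag i)) (hM1inv_diag i)) hyi
    linarith
  have hNzero : ∀ i, M2.mulVec e i = 0 → y i = 0 := by
    intro i h
    by_contra hc
    have hyi : 0 < y i := lt_of_le_of_ne (hAe0 i) (Ne.symm hc)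
    have := hNplus i hyi
    rw [h] at this
    exact lt_irrefl 0 this
  -- the second factor is a nonsingular M-matrix
  have hM2M : IsNonsingMMatrix M2 := by
    rcases hor with hAzconn | hAsconn
    · -- Az connects: M2 e is strictly positive
      apply zmat_of_pos M2 hM2Z e he0
      intro i
      rcases (hAe0 i).lt_or_eq with hyi | hyi
      · exact hNplus i hyi
      · obtain ⟨r, hr1, p, hp0, hpr, hsteps⟩ := hAzconn i hyi.symm
        have hCpath : ∀ k, k < r → 0 < Cm (p k) (p (k + 1)) :=
          fun k hk => hCmentry (p k) (p (k+1)) (hsteps k hk)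
        have hpow : 0 < (Cm ^ r) (p 0) (p r) := pow_path_pos hCm0 r p hCpath
        have hM1ij : 0 < M1⁻¹ i (p r) := by
          have h := hM1inv_ge r i (p r)
          rw [← hp0] at h ⊢
          have := mul_pos hpow (inv_pos.mpr (hdiag (p r)))
          linarith
        have hge := hM2e_ge i (p r)
        have : 0 < M1⁻¹ i (p r) * y (p r) := mul_pos hM1ij hpr
        linarith
    · -- As connects: use the connectivity lemma for M2 itself
      have hconn' : ∀ i, M2.mulVec e i = 0 → ∃ r : ℕ, 1 ≤ r ∧ ∃ p : ℕ → Fin n, p 0 = i ∧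
          0 < M2.mulVec e (p r) ∧ ∀ k, k < r → M2 (p k) (p (k + 1)) ≠ 0 := by
        intro i hi
        obtain ⟨r, hr1, p, hp0, hpr, hsteps⟩ := hAsconn i (hNzero i hi)
        refine ⟨r, hr1, p, hp0, hNplus (p r) hpr, ?_⟩
        intro k hk
        have hAsk : As (p k) (p (k+1)) ≠ 0 := hsteps k hk
        have hne' : p k ≠ p (k+1) := by
          intro hEq
          rw [← hEq] at hAsk
          exact hAsk (hAsdiag (p k))
        exact ne_of_lt (hM2lt (p k) (p (k+1)) hne' hAsk)
      obtain ⟨z, hz1, hz2⟩ := exists_pos_vec M2 hM2Z e he0 hM2e0 hconn'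
      exact zmat_of_pos M2 hM2Z z (fun i => le_of_lt (hz1 i)) hz2
  -- conclusion
  have hAfact : A = M1 * M2 := by
    rw [hM2def, ← Matrix.mul_assoc, hM1M1inv, Matrix.one_mul]
  obtain ⟨hM2Z', hM2unit, hM2inv0⟩ := hM2M
  have hAunit : IsUnit A := by
    rw [hAfact]
    exact hM1unit.mul hM2unit
  have hAinv : A⁻¹ = M2⁻¹ * M1⁻¹ := by
    rw [hAfact, Matrix.mul_inv_rev]
  refine ⟨⟨M1, M2, ⟨hM1Z, hM1unit, hM1inv0⟩, ⟨hM2Z', hM2unit, hM2inv0⟩, hAfact⟩, hAunit, ?_⟩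
  intro i j
  rw [hAinv]
  exact entry_mul_nonneg hM2inv0 hM1inv0 i j
end

section
/- Discrete energy dissipation: Let n ≥ 1, let W = diag(ω₁,…,ω_n) and M = diag(m₁,…,m_n) be diagonal n×n real matrices with ω_i > 0 and m_i > 0 for all i, and let A be an invertible n×n real matrix such that every entry of A⁻¹ is nonnegative, 1ᵀA = 1ᵀWM, and A·1 = WM·1, where 1 is the all-ones vector. Let f : ℝ → ℝ be a convex function. Then for every g ∈ ℝⁿ, setting g' = A⁻¹WMg, one has ∑_{i=1}^n ω_i m_i f(g'_i) ≤ ∑_{i=1}^n ω_i m_i f(g_i). In particular, the discrete energy E(g) = ∑_i ω_i m_i f(g_i) is non-increasing under one step of the fully discrete scheme. -/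
open Matrix BigOperators

/-- **Discrete energy dissipation.** With `W = diag(ω)`, `M = diag(m)` (positive diagonals),
`A` invertible with entrywise nonnegative inverse (monotone scheme), `1ᵀA = 1ᵀWM` and
`A·1 = WM·1`, for every convex `f : ℝ → ℝ` and every `g`, the step `g' = A⁻¹WMg` dissipates
the discrete energy: `∑ ω_i m_i f(g'_i) ≤ ∑ ω_i m_i f(g_i)`. -/
theorem stmt_4 {n : ℕ} (hn : 1 ≤ n) (ω m : Fin n → ℝ)
    (hω : ∀ i, 0 < ω i) (hm : ∀ i, 0 < m i)
    (A : Matrix (Fin n) (Fin n) ℝ) (hA : IsUnit A)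
    (hinv : ∀ i j, 0 ≤ A⁻¹ i j)
    (hrow : Matrix.vecMul (fun _ => (1 : ℝ)) A =
      Matrix.vecMul (fun _ => (1 : ℝ)) (Matrix.diagonal ω * Matrix.diagonal m))
    (hcol : A.mulVec (fun _ => (1 : ℝ)) =
      (Matrix.diagonal ω * Matrix.diagonal m).mulVec (fun _ => (1 : ℝ)))
    (f : ℝ → ℝ) (hf : ConvexOn ℝ Set.univ f)
    (g : Fin n → ℝ) :
    ∑ i, ω i * m i *
        f ((A⁻¹.mulVec ((Matrix.diagonal ω * Matrix.diagonal m).mulVec g)) i)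
      ≤ ∑ i, ω i * m i * f (g i) := by
  have hdet : IsUnit A.det := (Matrix.isUnit_iff_isUnit_det A).mp hA
  have hAA : A * A⁻¹ = 1 := Matrix.mul_nonsing_inv A hdet
  have hA'A : A⁻¹ * A = 1 := Matrix.nonsing_inv_mul A hdet
  set B : Matrix (Fin n) (Fin n) ℝ := fun i j => A⁻¹ i j * (ω j * m j) with hB
  have hBnn : ∀ i j, 0 ≤ B i j := fun i j =>
    mul_nonneg (hinv i j) (mul_nonneg (hω j).le (hm j).le)
  -- `WM · 1 = (ω*m)` pointwise
  have hWM1 : (Matrix.diagonal ω * Matrix.diagonal m).mulVec (fun _ => (1 : ℝ)) =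
      fun j => ω j * m j := by
    funext j
    simp [Matrix.diagonal_mul_diagonal, Matrix.mulVec_diagonal]
  have h1WM : Matrix.vecMul (fun _ => (1 : ℝ)) (Matrix.diagonal ω * Matrix.diagonal m) =
      fun j => ω j * m j := by
    funext j
    simp [Matrix.diagonal_mul_diagonal, Matrix.vecMul_diagonal]
  -- row sums of B are 1
  have hrowB : ∀ i, ∑ j, B i j = 1 := by
    intro i
    have : A⁻¹.mulVec (A.mulVec (fun _ => (1 : ℝ))) = fun _ => (1 : ℝ) := by
      rw [Matrix.mulVec_mulVec, hA'A, Matrix.one_mulVec]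
    have h := congrFun this i
    rw [hcol, hWM1] at h
    simpa [Matrix.mulVec, dotProduct, hB, mul_comm, mul_assoc, mul_left_comm] using h
  -- column sums: ∑ i, ω i * m i * B i j = ω j * m j
  have hcolB : ∀ j, ∑ i, ω i * m i * B i j = ω j * m j := by
    intro j
    have : Matrix.vecMul (Matrix.vecMul (fun _ => (1 : ℝ)) A) A⁻¹ = fun _ => (1 : ℝ) := by
      rw [Matrix.vecMul_vecMul, hAA, Matrix.vecMul_one]
    have h := congrFun this j
    rw [hrow, h1WM] at h
    simp only [Matrix.vecMul, dotProduct] at h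
    have : ∑ i, ω i * m i * B i j = (∑ i, (ω i * m i) * A⁻¹ i j) * (ω j * m j) := by
      rw [Finset.sum_mul]
      apply Finset.sum_congr rfl
      intro i _
      simp [hB]; ring
    rw [this, h, one_mul]
  -- g' i = ∑ j, B i j * g j
  have hg' : ∀ i, (A⁻¹.mulVec ((Matrix.diagonal ω * Matrix.diagonal m).mulVec g)) i
      = ∑ j, B i j * g j := by
    intro i
    simp only [Matrix.mulVec, dotProduct, Matrix.diagonal_mul_diagonal,
      Matrix.mulVec_diagonal, hB]
    apply Finset.sum_congr rfl
    intro j _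
    · simp only [Matrix.diagonal_apply, hB]
      rw [Finset.sum_eq_single j] <;> simp +contextual [eq_comm]
      ring
  calc ∑ i, ω i * m i * f ((A⁻¹.mulVec ((Matrix.diagonal ω * Matrix.diagonal m).mulVec g)) i)
      ≤ ∑ i, ω i * m i * (∑ j, B i j * f (g j)) := by
        apply Finset.sum_le_sum
        intro i _
        apply mul_le_mul_of_nonneg_left _ (mul_nonneg (hω i).le (hm i).le)
        rw [hg' i]
        have := hf.map_sum_le (t := Finset.univ) (w := fun j => B i j) (p := g)
          (fun j _ => hBnn i j) (hrowB i) (fun j _ => trivial)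
        simpa using this
    _ = ∑ j, (∑ i, ω i * m i * B i j) * f (g j) := by
        simp_rw [Finset.mul_sum, Finset.sum_mul]
        rw [Finset.sum_comm]
        apply Finset.sum_congr rfl; intro j _
        apply Finset.sum_congr rfl; intro i _
        ring
    _ = ∑ i, ω i * m i * f (g i) := by
        apply Finset.sum_congr rfl
        intro j _
        rw [hcolB j]
end

section
/- Monotonicity of the second order scheme in one dimension: Let N ≥ 3, h > 0, Δt > 0, D > 0. Let M₁,…,M_N be positive reals and u₁,…,u_N reals with u₁ = u_N = 0. Adopt the ghost conventions M₀ := M₂, M_{N+1} := M_{N−1}, u₀ := −u₂, u_{N+1} := −u_{N−1}. Define the N×N real matrix A by the linear map (Ag)_i = M_i g_i + Δt·(u_{i−1}ĝ_{i−1} − u_{i+1}ĝ_{i+1})/(2h) + Δt·D·[−(M_{i−1}+M_i)ĝ_{i−1} + (M_{i−1}+2M_i+M_{i+1})g_i − (M_i+M_{i+1})ĝ_{i+1}]/(2h²) for i = 1,…,N, where ĝ_j = g_j for 1 ≤ j ≤ N and the folded ghost values are ĝ₀ := g₂ and ĝ_{N+1} := g_{N−1}. Assume (i) h·|u_j| ≤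 D·min{M_{j−1}, M_j, M_{j+1}} for all j = 1,…,N (using the ghost conventions), and (ii) M_i + Δt·(u_{i−1} − u_{i+1})/(2h) > 0 for all i = 1,…,N (using the ghost conventions). Then A is a nonsingular M-matrix; in particular A is invertible and every entry of A⁻¹ is nonnegative. -/
open Matrix BigOperators

/-- If a matrix has nonpositive off-diagonal entries and positive row sums, then any vector
with nonnegative image under `mulVec` is itself nonnegative. -/
private lemma aux_nonneg {n : ℕ} (A : Matrix (Fin n) (Fin n) ℝ)
    (hoff : ∀ i j, i ≠ j → A i j ≤ 0)
    (hrow : ∀ i, 0 < A.mulVec (fun _ => (1:ℝ)) i)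
    (x : Fin n → ℝ) (hx : ∀ i, 0 ≤ A.mulVec x i) : ∀ i, 0 ≤ x i := by
  by_contra hcon
  push_neg at hcon
  obtain ⟨k0, hk0⟩ := hcon
  obtain ⟨k, -, hk⟩ := Finset.exists_min_image Finset.univ x ⟨k0, Finset.mem_univ k0⟩
  have hxk : x k < 0 := lt_of_le_of_lt (hk k0 (Finset.mem_univ k0)) hk0
  have h1 : A.mulVec x k ≤ x k * A.mulVec (fun _ => (1:ℝ)) k := by
    simp only [Matrix.mulVec, dotProduct, mul_one, Finset.mul_sum]
    apply Finset.sum_le_sum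
    intro j _
    by_cases hj : j = k
    · subst hj; ring_nf; exact le_refl _
    · have h2 := hoff k j (fun hh => hj hh.symm)
      have h3 := hk j (Finset.mem_univ j)
      nlinarith
  have h4 : x k * A.mulVec (fun _ => (1:ℝ)) k < 0 :=
    mul_neg_of_neg_of_pos hxk (hrow k)
  exact absurd (hx k) (not_le.2 (lt_of_le_of_lt h1 h4))

private lemma aux_mmatrix {n : ℕ} (A : Matrix (Fin n) (Fin n) ℝ)
    (hoff : ∀ i j, i ≠ j → A i j ≤ 0)
    (hrow : ∀ i, 0 < A.mulVec (fun _ => (1:ℝ)) i) :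
    IsUnit A ∧ ∀ i j, 0 ≤ A⁻¹ i j := by
  have hdet : A.det ≠ 0 := by
    intro h0
    obtain ⟨v, hv0, hAv⟩ := (Matrix.exists_mulVec_eq_zero_iff).2 h0
    have h1 : ∀ i, 0 ≤ v i := aux_nonneg A hoff hrow v (by simp [hAv])
    have h2 : ∀ i, 0 ≤ (-v) i := aux_nonneg A hoff hrow (-v)
      (by simp [Matrix.mulVec_neg, hAv])
    exact hv0 (funext fun i => le_antisymm (by simpa [neg_nonneg] using h2 i) (h1 i))
  have hU : IsUnit A := (Matrix.isUnit_iff_isUnit_det A).2 (isUnit_iff_ne_zero.2 hdet)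
  refine ⟨hU, fun i j => ?_⟩
  have hmul : A * A⁻¹ = 1 := Matrix.mul_nonsing_inv A (isUnit_iff_ne_zero.2 hdet)
  refine aux_nonneg A hoff hrow (fun k => A⁻¹ k j) (fun k => ?_) i
  have hcol : A.mulVec (fun k => A⁻¹ k j) k = (A * A⁻¹) k j := by
    simp [Matrix.mulVec, dotProduct, Matrix.mul_apply]
  rw [hcol, hmul, Matrix.one_apply]
  split <;> norm_num


/-- Folding of grid indices `0, 1, …, N+1` (1-based) onto `Fin N` (0-based), implementing the
ghost conventions `ĝ₀ := g₂` and `ĝ_{N+1} := g_{N−1}`: an in-range index `1 ≤ j ≤ N` is sent to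
`j - 1 : Fin N`, the ghost index `0` is sent to `1 : Fin N` (i.e. `g₂`) and the ghost index
`N+1` is sent to `N - 2 : Fin N` (i.e. `g_{N−1}`). -/
def foldIdx1D (N : ℕ) (hN : 3 ≤ N) (j : ℕ) : Fin N :=
  if h : 1 ≤ j ∧ j ≤ N then ⟨j - 1, by omega⟩
  else if j = 0 then ⟨1, by omega⟩
  else ⟨N - 2, by omega⟩

/-- **Monotonicity of the second order scheme in one dimension.** Under the mesh constraint
`h |u_j| ≤ D min{M_{j−1}, M_j, M_{j+1}}` and the time step constraint
`M_i + Δt (u_{i−1} − u_{i+1})/(2h) > 0` (with the ghost conventions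
`M₀ = M₂`, `M_{N+1} = M_{N−1}`, `u₀ = −u₂`, `u_{N+1} = −u_{N−1}` and `u₁ = u_N = 0`),
the coefficient matrix `A` of the backward Euler second order finite difference scheme,
defined by `(Ag)_i = M_i g_i + Δt (u_{i−1}ĝ_{i−1} − u_{i+1}ĝ_{i+1})/(2h)
+ Δt D [−(M_{i−1}+M_i)ĝ_{i−1} + (M_{i−1}+2M_i+M_{i+1})g_i − (M_i+M_{i+1})ĝ_{i+1}]/(2h²)`
(grid index of `i : Fin N` being `i+1 ∈ {1,…,N}`), is a nonsingular M-matrix: it has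
nonpositive off-diagonal entries, is invertible, and `A⁻¹` is entrywise nonnegative. -/
theorem stmt_6 (N : ℕ) (hN : 3 ≤ N) (h Δt D : ℝ)
    (hh : 0 < h) (hΔt : 0 < Δt) (hD : 0 < D)
    (M u : ℕ → ℝ)
    (hMpos : ∀ j, 1 ≤ j → j ≤ N → 0 < M j)
    (hu1 : u 1 = 0) (huN : u N = 0)
    (hM0 : M 0 = M 2) (hMN1 : M (N + 1) = M (N - 1))
    (hu0 : u 0 = -u 2) (huN1 : u (N + 1) = -u (N - 1))
    (A : Matrix (Fin N) (Fin N) ℝ)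
    (hA : ∀ g : Fin N → ℝ, ∀ i : Fin N,
      A.mulVec g i =
        M (i.1 + 1) * g i
        + Δt * (u i.1 * g (foldIdx1D N hN i.1)
            - u (i.1 + 2) * g (foldIdx1D N hN (i.1 + 2))) / (2 * h)
        + Δt * D * (-(M i.1 + M (i.1 + 1)) * g (foldIdx1D N hN i.1)
            + (M i.1 + 2 * M (i.1 + 1) + M (i.1 + 2)) * g i
            - (M (i.1 + 1) + M (i.1 + 2)) * g (foldIdx1D N hN (i.1 + 2))) / (2 * h ^ 2))
    (cond1 : ∀ j, 1 ≤ j → j ≤ N →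
      h * |u j| ≤ D * min (M (j - 1)) (min (M j) (M (j + 1))))
    (cond2 : ∀ i, 1 ≤ i → i ≤ N →
      0 < M i + Δt * (u (i - 1) - u (i + 1)) / (2 * h)) :
    (∀ i j, i ≠ j → A i j ≤ 0) ∧ IsUnit A ∧ ∀ i j, 0 ≤ A⁻¹ i j := by
  -- key coefficient bounds
  have hc1 : ∀ i : ℕ, i < N → h * u i ≤ D * (M i + M (i + 1)) := by
    intro i hi
    rcases Nat.eq_zero_or_pos i with h0 | h1
    · subst h0
      rw [hu0, hM0]
      have hcc := cond1 2 (by omega) (by omega)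
      have hm1 : min (M 1) (min (M 2) (M 3)) ≤ M 1 := min_le_left _ _
      have hM2 : 0 < M 2 := hMpos 2 (by omega) (by omega)
      have habs : -u 2 ≤ |u 2| := neg_le_abs _
      nlinarith
    · have hcc := cond1 i h1 (by omega)
      have hm1 : min (M (i-1)) (min (M i) (M (i+1))) ≤ M i :=
        le_trans (min_le_right _ _) (min_le_left _ _)
      have hM2 : 0 < M (i+1) := hMpos (i+1) (by omega) (by omega)
      have habs : u i ≤ |u i| := le_abs_self _
      nlinarith
  have hc2 : ∀ i : ℕ, i < N → -(h * u (i + 2)) ≤ D * (M (i + 1) + M (i + 2)) := by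
    intro i hi
    rcases Nat.lt_or_ge i (N - 1) with h0 | h1
    · have hcc := cond1 (i+2) (by omega) (by omega)
      have he : i + 2 - 1 = i + 1 := by omega
      rw [he] at hcc
      have hm1 : min (M (i+1)) (min (M (i+2)) (M (i+3))) ≤ M (i+1) := min_le_left _ _
      have hM2 : 0 < M (i+2) := hMpos (i+2) (by omega) (by omega)
      have habs : -u (i+2) ≤ |u (i+2)| := neg_le_abs _
      nlinarith
    · have hiN : i = N - 1 := by omega
      have e1 : i + 2 = N + 1 := by omega
      have e2 : i + 1 = N := by omega
      rw [e1, e2, huN1, hMN1]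
      have hcc := cond1 (N-1) (by omega) (by omega)
      have hm1 : min (M (N-1-1)) (min (M (N-1)) (M (N-1+1))) ≤ M (N-1) :=
        le_trans (min_le_right _ _) (min_le_left _ _)
      have hMN : 0 < M N := hMpos N (by omega) (by omega)
      have habs : u (N-1) ≤ |u (N-1)| := le_abs_self _
      nlinarith
  -- off-diagonal entries are nonpositive
  have hoff : ∀ i j : Fin N, i ≠ j → A i j ≤ 0 := by
    intro i j hij
    have hAij : A i j = A.mulVec (Pi.single j (1:ℝ)) i := by
      simp [Matrix.mulVec_single]
    have hs0 : (Pi.single j (1:ℝ) : Fin N → ℝ) i = 0 := by simp [Pi.single_apply, hij]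
    rw [hAij, hA, hs0]
    set a := (Pi.single j (1:ℝ) : Fin N → ℝ) (foldIdx1D N hN i.1) with ha_def
    set b := (Pi.single j (1:ℝ) : Fin N → ℝ) (foldIdx1D N hN (i.1 + 2)) with hb_def
    have ha : 0 ≤ a := by
      rw [ha_def]
      rcases eq_or_ne (foldIdx1D N hN i.1) j with hc | hc
      · rw [hc, Pi.single_eq_same]; norm_num
      · rw [Pi.single_eq_of_ne hc]
    have hb : 0 ≤ b := by
      rw [hb_def]
      rcases eq_or_ne (foldIdx1D N hN (i.1 + 2)) j with hc | hc
      · rw [hc, Pi.single_eq_same]; norm_num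
      · rw [Pi.single_eq_of_ne hc]
    have hc1' := hc1 i.1 i.2
    have hc2' := hc2 i.1 i.2
    have heq : M (i.1 + 1) * 0
        + Δt * (u i.1 * a - u (i.1 + 2) * b) / (2 * h)
        + Δt * D * (-(M i.1 + M (i.1 + 1)) * a
            + (M i.1 + 2 * M (i.1 + 1) + M (i.1 + 2)) * 0
            - (M (i.1 + 1) + M (i.1 + 2)) * b) / (2 * h ^ 2)
        = (Δt * (h * u i.1 - D * (M i.1 + M (i.1 + 1))) / (2 * h ^ 2)) * a
          + (Δt * (-(h * u (i.1 + 2)) - D * (M (i.1 + 1) + M (i.1 + 2))) / (2 * h ^ 2)) * b := by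
      field_simp
      ring
    rw [heq]
    have hd1 : Δt * (h * u i.1 - D * (M i.1 + M (i.1 + 1))) ≤ 0 := by nlinarith
    have hd2 : Δt * (-(h * u (i.1 + 2)) - D * (M (i.1 + 1) + M (i.1 + 2))) ≤ 0 := by nlinarith
    have hden : (0:ℝ) ≤ 2 * h ^ 2 := by positivity
    exact add_nonpos
      (mul_nonpos_of_nonpos_of_nonneg (div_nonpos_of_nonpos_of_nonneg hd1 hden) ha)
      (mul_nonpos_of_nonpos_of_nonneg (div_nonpos_of_nonpos_of_nonneg hd2 hden) hb)
  -- positive row sums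
  have hrow : ∀ i : Fin N, 0 < A.mulVec (fun _ => (1:ℝ)) i := by
    intro i
    rw [hA]
    have hcc := cond2 (i.1 + 1) (by omega) (by omega)
    have e1 : i.1 + 1 - 1 = i.1 := by omega
    have e2 : i.1 + 1 + 1 = i.1 + 2 := by omega
    rw [e1, e2] at hcc
    have heq : M (i.1 + 1) * 1
        + Δt * (u i.1 * 1 - u (i.1 + 2) * 1) / (2 * h)
        + Δt * D * (-(M i.1 + M (i.1 + 1)) * 1
            + (M i.1 + 2 * M (i.1 + 1) + M (i.1 + 2)) * 1
            - (M (i.1 + 1) + M (i.1 + 2)) * 1) / (2 * h ^ 2)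
        = M (i.1 + 1) + Δt * (u i.1 - u (i.1 + 2)) / (2 * h) := by
      ring
    rw [heq]
    exact hcc
  obtain ⟨hU, hinv⟩ := aux_mmatrix A hoff hrow
  exact ⟨hoff, hU, hinv⟩
end

section
/- Semi-discrete energy dissipation: Let Ω = ∏_{i=1}^d [a_i, b_i] ⊂ ℝ^d be a closed box, let D > 0 and Δt > 0, let 𝓜 : Ω → ℝ be continuous with 𝓜 > 0 on Ω, and let u : ℝ^d → ℝ^d be a continuously differentiable vector field with ∇·u = 0 on Ω and u·n = 0 on ∂Ω. Let g, g' : ℝ^d → ℝ be continuously differentiable functions satisfying the one-step variational identity tested with g': ∫_Ω 𝓜 (g')² dx + Δt·D·∫_Ω 𝓜 |∇g'|² dx + Δt·∫_Ω g' (u·∇g') dx = ∫_Ω 𝓜 g g' dx. Then (1/Δt)·(∫_Ω 𝓜 (g')² dx − ∫_Ω 𝓜 g² dx) ≤ −2D·∫_Ω 𝓜 |∇g'|² dx. Writing ρ = 𝓜 g and ρ' = 𝓜 g', this states that the backward Euler step dissipates the Pearson χ²-type energy: (1/Δt)(∫_Ω (ρ')²/𝓜 − ∫_Ω ρ²/𝓜)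 ≤ −2D ∫_Ω 𝓜 |∇(ρ'/𝓜)|². -/
open BigOperators MeasureTheory Set

lemma conv_zero {n : ℕ} (a b : Fin (n+1) → ℝ) (hle : a ≤ b)
    (u : (Fin (n+1) → ℝ) → (Fin (n+1) → ℝ)) (hu : ContDiff ℝ 1 u)
    (hdiv : ∀ x ∈ Set.Icc a b,
      ∑ i, fderiv ℝ (fun y => u y i) x (Pi.single i 1) = 0)
    (htang : ∀ i : Fin (n+1), ∀ x ∈ Set.Icc a b, (x i = a i ∨ x i = b i) → u x i = 0)
    (g' : (Fin (n+1) → ℝ) → ℝ) (hg' : ContDiff ℝ 1 g') :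
    ∫ x in Set.Icc a b, g' x * ∑ i, u x i * fderiv ℝ g' x (Pi.single i 1) = 0 := by
  have hui : ∀ i : Fin (n+1), ContDiff ℝ 1 (fun y => u y i) := fun i =>
    (contDiff_pi.1 hu) i
  set f : Fin (n+1) → (Fin (n+1) → ℝ) → ℝ := fun i x => u x i * (g' x * g' x) with hf
  set f' : Fin (n+1) → (Fin (n+1) → ℝ) → (Fin (n+1) → ℝ) →L[ℝ] ℝ := fun i x =>
    (u x i) • ((g' x) • fderiv ℝ g' x + (g' x) • fderiv ℝ g' x)
      + (g' x * g' x) • fderiv ℝ (fun y => u y i) x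
    with hf'
  have hd : ∀ x, ∀ i, HasFDerivAt (f i) (f' i x) x := by
    intro x i
    exact ((hui i).differentiable one_ne_zero x).hasFDerivAt.mul
      (((hg'.differentiable one_ne_zero x).hasFDerivAt.mul
        (hg'.differentiable one_ne_zero x).hasFDerivAt))
  have hdivint := MeasureTheory.integral_divergence_of_hasFDerivAt_off_countable'
    a b hle f f' ∅ countable_empty
    (fun i => ((hui i).continuous.mul (hg'.continuous.mul hg'.continuous)).continuousOn)
    (fun x _ i => hd x i)
    (by
      apply ContinuousOn.integrableOn_compact isCompact_Icc
      apply Continuous.continuousOn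
      apply continuous_finset_sum
      intro i _
      simp only [hf', ContinuousLinearMap.add_apply, ContinuousLinearMap.smul_apply,
        smul_eq_mul]
      have h1 : Continuous fun x => fderiv ℝ g' x (Pi.single i 1) :=
        (ContinuousLinearMap.apply ℝ ℝ (Pi.single i 1 : Fin (n+1) → ℝ)).continuous.comp
          (hg'.continuous_fderiv one_ne_zero)
      have h2 : Continuous fun x => fderiv ℝ (fun y => u y i) x (Pi.single i 1) :=
        (ContinuousLinearMap.apply ℝ ℝ (Pi.single i 1 : Fin (n+1) → ℝ)).continuous.comp
          ((hui i).continuous_fderiv one_ne_zero)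
      have hcu : Continuous fun x => u x i := (hui i).continuous
      exact (hcu.mul ((hg'.continuous.mul h1).add (hg'.continuous.mul h1))).add
        ((hg'.continuous.mul hg'.continuous).mul h2))
  -- boundary terms vanish
  have hbd : ∀ (i : Fin (n+1)) (c : ℝ), c = a i ∨ c = b i →
      ∀ y ∈ Set.Icc (a ∘ i.succAbove) (b ∘ i.succAbove), f i (i.insertNth c y) = 0 := by
    intro i c hc y hy
    have hmem : i.insertNth c y ∈ Set.Icc a b := by
      refine Fin.insertNth_mem_Icc.2 ⟨?_, hy⟩
      rcases hc with rfl | rfl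
      exacts [⟨le_rfl, hle i⟩, ⟨hle i, le_rfl⟩]
    have : u (i.insertNth c y) i = 0 := by
      apply htang i _ hmem
      rcases hc with rfl | rfl
      · exact Or.inl (Fin.insertNth_apply_same ..)
      · exact Or.inr (Fin.insertNth_apply_same ..)
    simp [hf, this]
  have hRHS : (∑ i : Fin (n+1),
      ((∫ y in Set.Icc (a ∘ i.succAbove) (b ∘ i.succAbove), f i (i.insertNth (b i) y)) -
       ∫ y in Set.Icc (a ∘ i.succAbove) (b ∘ i.succAbove), f i (i.insertNth (a i) y))) = 0 := by
    apply Finset.sum_eq_zero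
    intro i _
    rw [setIntegral_congr_fun measurableSet_Icc (hbd i (b i) (Or.inr rfl)),
        setIntegral_congr_fun measurableSet_Icc (hbd i (a i) (Or.inl rfl))]
    simp
  rw [hRHS] at hdivint
  have heq : ∀ x ∈ Set.Icc a b, (∑ i, f' i x (Pi.single i 1))
      = 2 * (g' x * ∑ i, u x i * fderiv ℝ g' x (Pi.single i 1)) := by
    intro x hx
    have h0 := hdiv x hx
    have hterm : ∀ i : Fin (n+1), f' i x (Pi.single i 1)
        = 2 * (g' x * (u x i * fderiv ℝ g' x (Pi.single i 1)))
          + (g' x * g' x) * fderiv ℝ (fun y => u y i) x (Pi.single i 1) := by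
      intro i
      simp only [hf', ContinuousLinearMap.add_apply, ContinuousLinearMap.smul_apply,
        smul_eq_mul]
      ring
    rw [Finset.sum_congr rfl (fun i _ => hterm i), Finset.sum_add_distrib,
      ← Finset.mul_sum, ← Finset.mul_sum, ← Finset.mul_sum, h0, mul_zero, add_zero]
  rw [setIntegral_congr_fun measurableSet_Icc heq, integral_const_mul] at hdivint
  linarith

/-- **Semi-discrete energy dissipation.** Let `Ω = ∏_i [a_i, b_i] ⊂ ℝ^d`, `D, Δt > 0`,
`𝓜` continuous and positive on `Ω`, and `u` a `C¹` vector field with `∇·u = 0` on `Ω` and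
`u·n = 0` on `∂Ω`. If `g, g'` are `C¹` and satisfy the backward Euler variational identity
tested with `g'`:
`∫ 𝓜 g'² + Δt·D·∫ 𝓜 |∇g'|² + Δt·∫ g' (u·∇g') = ∫ 𝓜 g g'`,
then `(1/Δt)(∫ 𝓜 g'² − ∫ 𝓜 g²) ≤ −2D ∫ 𝓜 |∇g'|²` (the Pearson χ²-type energy dissipates). -/
theorem stmt_14 (d : ℕ) (a b : Fin d → ℝ)
    (D Δt : ℝ) (hD : 0 < D) (hΔt : 0 < Δt)
    (𝓜 : (Fin d → ℝ) → ℝ)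
    (h𝓜c : ContinuousOn 𝓜 (Set.Icc a b))
    (h𝓜pos : ∀ x ∈ Set.Icc a b, 0 < 𝓜 x)
    (u : (Fin d → ℝ) → (Fin d → ℝ)) (hu : ContDiff ℝ 1 u)
    (hdiv : ∀ x ∈ Set.Icc a b,
      ∑ i, fderiv ℝ (fun y => u y i) x (Pi.single i 1) = 0)
    (htang : ∀ i : Fin d, ∀ x ∈ Set.Icc a b, (x i = a i ∨ x i = b i) → u x i = 0)
    (g g' : (Fin d → ℝ) → ℝ) (hg : ContDiff ℝ 1 g) (hg' : ContDiff ℝ 1 g')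
    (hstep : (∫ x in Set.Icc a b, 𝓜 x * (g' x) ^ 2)
        + Δt * D * (∫ x in Set.Icc a b,
            𝓜 x * ∑ i, (fderiv ℝ g' x (Pi.single i 1)) ^ 2)
        + Δt * (∫ x in Set.Icc a b,
            g' x * ∑ i, u x i * fderiv ℝ g' x (Pi.single i 1))
        = ∫ x in Set.Icc a b, 𝓜 x * g x * g' x) :
    (1 / Δt) * ((∫ x in Set.Icc a b, 𝓜 x * (g' x) ^ 2)
        - ∫ x in Set.Icc a b, 𝓜 x * (g x) ^ 2)
      ≤ -(2 * D) * ∫ x in Set.Icc a b,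
          𝓜 x * ∑ i, (fderiv ℝ g' x (Pi.single i 1)) ^ 2 := by
  -- The convection term vanishes.
  have hconv : (∫ x in Set.Icc a b,
      g' x * ∑ i, u x i * fderiv ℝ g' x (Pi.single i 1)) = 0 := by
    by_cases hle : a ≤ b
    · cases d with
      | zero => simp
      | succ n => exact conv_zero a b hle u hu hdiv htang g' hg'
    · simp [Set.Icc_eq_empty hle]
  rw [hconv, mul_zero, add_zero] at hstep
  -- integrability of the quadratic quantities
  have hi1 : IntegrableOn (fun x => 𝓜 x * (g' x) ^ 2) (Set.Icc a b) :=
    (h𝓜c.mul ((hg'.continuous.pow 2).continuousOn)).integrableOn_compact isCompact_Icc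
  have hi2 : IntegrableOn (fun x => 𝓜 x * (g x) ^ 2) (Set.Icc a b) :=
    (h𝓜c.mul ((hg.continuous.pow 2).continuousOn)).integrableOn_compact isCompact_Icc
  have hi3 : IntegrableOn (fun x => 𝓜 x * g x * g' x) (Set.Icc a b) :=
    ((h𝓜c.mul hg.continuous.continuousOn).mul hg'.continuous.continuousOn).integrableOn_compact
      isCompact_Icc
  -- Young's inequality: 2 ∫ 𝓜 g g' ≤ ∫ 𝓜 g² + ∫ 𝓜 g'²
  have hyoung : 2 * (∫ x in Set.Icc a b, 𝓜 x * g x * g' x)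
      ≤ (∫ x in Set.Icc a b, 𝓜 x * (g x) ^ 2) + ∫ x in Set.Icc a b, 𝓜 x * (g' x) ^ 2 := by
    have hnn : 0 ≤ ∫ x in Set.Icc a b, 𝓜 x * (g x - g' x) ^ 2 := by
      apply setIntegral_nonneg measurableSet_Icc
      intro x hx
      exact mul_nonneg (h𝓜pos x hx).le (sq_nonneg _)
    have hexp : (∫ x in Set.Icc a b, 𝓜 x * (g x - g' x) ^ 2)
        = (∫ x in Set.Icc a b, 𝓜 x * (g x) ^ 2)
          - 2 * (∫ x in Set.Icc a b, 𝓜 x * g x * g' x)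
          + ∫ x in Set.Icc a b, 𝓜 x * (g' x) ^ 2 := by
      have e1 := integral_add (μ := volume.restrict (Set.Icc a b))
        (hi2.sub (hi3.const_mul 2)) hi1
      simp only [Pi.sub_apply] at e1
      have e2 := integral_sub (μ := volume.restrict (Set.Icc a b)) hi2 (hi3.const_mul 2)
      rw [show (fun x => 𝓜 x * (g x - g' x) ^ 2)
          = fun x => (𝓜 x * (g x) ^ 2 - 2 * (𝓜 x * g x * g' x)) + 𝓜 x * (g' x) ^ 2 from by
          ext x; ring,
        e1, e2, integral_const_mul]
    linarith
  -- gradient term is nonnegative (not strictly needed, but cheap)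
  set A := ∫ x in Set.Icc a b, 𝓜 x * (g' x) ^ 2
  set B := ∫ x in Set.Icc a b, 𝓜 x * ∑ i, (fderiv ℝ g' x (Pi.single i 1)) ^ 2
  set C := ∫ x in Set.Icc a b, 𝓜 x * (g x) ^ 2
  set P := ∫ x in Set.Icc a b, 𝓜 x * g x * g' x
  -- hstep : A + Δt * D * B = P, hyoung : 2P ≤ C + A
  have h1 : A - C ≤ -(2 * Δt * D * B) := by linarith
  rw [div_mul_eq_mul_div, div_le_iff₀ hΔt]
  nlinarith [hΔt.le]
end

section
/- 𝓜-symmetric decomposition identity: Let d ≥ 1, let D > 0 be a constant, let Ω ⊆ ℝ^d be open, let ρ, 𝓜 : Ω → ℝ be twice continuously differentiable with 𝓜 > 0 on Ω, and let b : Ω → ℝ^d be continuously differentiable. Define u = D∇𝓜 − 𝓜 b. If ∇·(b𝓜 − D∇𝓜) = 0 on Ω (i.e., u is divergence free), then at every point of Ω: ∇·(D∇ρ − bρ) = ∇·(D 𝓜 ∇(ρ/𝓜)) + u·∇(ρ/𝓜). In other words, the irreversible Fokker–Planck operator decomposes into the 𝓜-weighted diffusion (gradient-flow) part and the transport (Hamiltonian)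 part u·∇(ρ/𝓜) with divergence-free u. -/
open BigOperators

/-- The `i`-th partial derivative of `f : ℝ^d → ℝ` at `x`. -/
noncomputable def pd {d : ℕ} (f : (Fin d → ℝ) → ℝ) (x : Fin d → ℝ) (i : Fin d) : ℝ :=
  fderiv ℝ f x (Pi.single i 1)

section helpers

variable {d : ℕ} {f g : (Fin d → ℝ) → ℝ} {x : Fin d → ℝ} {i : Fin d}

lemma pd_congr (h : f =ᶠ[nhds x] g) : pd f x i = pd g x i := by
  unfold pd; rw [h.fderiv_eq]

lemma pd_add (hf : DifferentiableAt ℝ f x) (hg : DifferentiableAt ℝ g x) :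
    pd (fun y => f y + g y) x i = pd f x i + pd g x i := by
  unfold pd; rw [fderiv_fun_add hf hg]; simp

lemma pd_neg : pd (fun y => -f y) x i = -pd f x i := by
  unfold pd; rw [fderiv_fun_neg]; simp

lemma pd_mul (hf : DifferentiableAt ℝ f x) (hg : DifferentiableAt ℝ g x) :
    pd (fun y => f y * g y) x i = f x * pd g x i + g x * pd f x i := by
  unfold pd; rw [fderiv_fun_mul hf hg]; simp

lemma diffAt_pd {Ω : Set (Fin d → ℝ)} (hΩ : IsOpen Ω) (hf : ContDiffOn ℝ 2 f Ω)
    (hx : x ∈ Ω) : DifferentiableAt ℝ (fun y => pd f y i) x := by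
  have h1 : ContDiffOn ℝ 1 (fderiv ℝ f) Ω := hf.fderiv_of_isOpen hΩ (by norm_num)
  have h2 : ContDiffOn ℝ 1 (fun y => fderiv ℝ f y (Pi.single i 1)) Ω :=
    h1.clm_apply contDiffOn_const
  exact (h2.differentiableOn one_ne_zero).differentiableAt (hΩ.mem_nhds hx)

end helpers

/-- **𝓜-symmetric decomposition identity.** Let `d ≥ 1`, `D > 0`, `Ω ⊆ ℝ^d` open, `ρ, 𝓜` be
`C²` on `Ω` with `𝓜 > 0`, and `b` a `C¹` vector field on `Ω`. Define `u = D∇𝓜 − 𝓜 b`.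
If `∇·(b𝓜 − D∇𝓜) = 0` on `Ω` (so `u` is divergence free), then at every point of `Ω`:
`∇·(D∇ρ − bρ) = ∇·(D 𝓜 ∇(ρ/𝓜)) + u·∇(ρ/𝓜)`. -/
theorem stmt_15 (d : ℕ) (hd : 1 ≤ d) (D : ℝ) (hD : 0 < D)
    (Ω : Set (Fin d → ℝ)) (hΩ : IsOpen Ω)
    (ρ 𝓜 : (Fin d → ℝ) → ℝ) (b : (Fin d → ℝ) → (Fin d → ℝ))
    (hρ : ContDiffOn ℝ 2 ρ Ω) (h𝓜 : ContDiffOn ℝ 2 𝓜 Ω)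
    (hb : ContDiffOn ℝ 1 b Ω)
    (h𝓜pos : ∀ x ∈ Ω, 0 < 𝓜 x)
    (hstat : ∀ x ∈ Ω,
      ∑ i, pd (fun y => b y i * 𝓜 y - D * pd 𝓜 y i) x i = 0) :
    ∀ x ∈ Ω,
      ∑ i, pd (fun y => D * pd ρ y i - b y i * ρ y) x i
        = (∑ i, pd (fun y => D * 𝓜 y * pd (fun z => ρ z / 𝓜 z) y i) x i)
          + ∑ i, (D * pd 𝓜 x i - 𝓜 x * b x i) * pd (fun z => ρ z / 𝓜 z) x i := by
  intro x hx
  set g : (Fin d → ℝ) → ℝ := fun z => ρ z / 𝓜 z with hg_def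
  -- basic facts
  have h𝓜ne : ∀ y ∈ Ω, 𝓜 y ≠ 0 := fun y hy => (h𝓜pos y hy).ne'
  have hgC : ContDiffOn ℝ 2 g Ω := hρ.div h𝓜 h𝓜ne
  have hρdiff : ∀ y ∈ Ω, DifferentiableAt ℝ ρ y := fun y hy =>
    ((hρ.differentiableOn (by norm_num)).differentiableAt (hΩ.mem_nhds hy))
  have h𝓜diff : ∀ y ∈ Ω, DifferentiableAt ℝ 𝓜 y := fun y hy =>
    ((h𝓜.differentiableOn (by norm_num)).differentiableAt (hΩ.mem_nhds hy))
  have hgdiff : ∀ y ∈ Ω, DifferentiableAt ℝ g y := by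
    intro y hy
    exact (hgC.differentiableOn (by norm_num)).differentiableAt (hΩ.mem_nhds hy)
  have hbdiff : ∀ y ∈ Ω, ∀ i, DifferentiableAt ℝ (fun z => b z i) y := by
    intro y hy i
    have : DifferentiableAt ℝ b y :=
      (hb.differentiableOn one_ne_zero).differentiableAt (hΩ.mem_nhds hy)
    exact (differentiableAt_pi.mp this) i
  -- On Ω, ρ = 𝓜 * g
  have hρeq : ∀ y ∈ Ω, ρ y = 𝓜 y * g y := by
    intro y hy
    rw [hg_def, eq_comm, mul_comm, div_mul_cancel₀ _ (h𝓜ne y hy)]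
  -- Step A: for each i and y ∈ Ω, the flux identity
  have fluxA : ∀ i, ∀ y ∈ Ω,
      D * pd ρ y i - b y i * ρ y
        = D * 𝓜 y * pd g y i
          + g y * (D * pd 𝓜 y i - 𝓜 y * b y i) := by
    intro i y hy
    have hev : ρ =ᶠ[nhds y] fun z => 𝓜 z * g z :=
      Filter.eventuallyEq_of_mem (hΩ.mem_nhds hy) (fun z hz => hρeq z hz)
    have hpdρ : pd ρ y i = 𝓜 y * pd g y i + g y * pd 𝓜 y i := by
      rw [pd_congr hev, pd_mul (h𝓜diff y hy) (hgdiff y hy)]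
    rw [hpdρ, hρeq y hy]; ring
  -- u_i
  set u : (Fin d → ℝ) → Fin d → ℝ := fun y i => D * pd 𝓜 y i - 𝓜 y * b y i with hu_def
  have hudiff : ∀ i, DifferentiableAt ℝ (fun y => u y i) x := by
    intro i
    exact ((diffAt_pd hΩ h𝓜 hx).const_mul D).sub ((h𝓜diff x hx).mul (hbdiff x hx i))
  have hGdiff : ∀ i, DifferentiableAt ℝ (fun y => D * 𝓜 y * pd g y i) x := by
    intro i
    exact ((h𝓜diff x hx).const_mul D).mul (diffAt_pd hΩ hgC hx)
  -- Step B: divergence of each component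
  have divB : ∀ i,
      pd (fun y => D * pd ρ y i - b y i * ρ y) x i
        = pd (fun y => D * 𝓜 y * pd g y i) x i
          + (g x * pd (fun y => u y i) x i + u x i * pd g x i) := by
    intro i
    have hev : (fun y => D * pd ρ y i - b y i * ρ y)
        =ᶠ[nhds x] fun y => D * 𝓜 y * pd g y i + g y * u y i :=
      Filter.eventuallyEq_of_mem (hΩ.mem_nhds hx) (fun y hy => fluxA i y hy)
    rw [pd_congr hev, pd_add (hGdiff i) ((hgdiff x hx).fun_mul (hudiff i)),
      pd_mul (hgdiff x hx) (hudiff i)]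
  -- divergence of u vanishes
  have hdivu : ∑ i, pd (fun y => u y i) x i = 0 := by
    have : ∀ i, pd (fun y => u y i) x i
        = -pd (fun y => b y i * 𝓜 y - D * pd 𝓜 y i) x i := by
      intro i
      have : (fun y => u y i) = fun y => -(b y i * 𝓜 y - D * pd 𝓜 y i) := by
        funext y; simp [hu_def]; ring
      rw [this, pd_neg]
    simp only [this, Finset.sum_neg_distrib]
    rw [hstat x hx]; ring
  calc ∑ i, pd (fun y => D * pd ρ y i - b y i * ρ y) x i
      = ∑ i, (pd (fun y => D * 𝓜 y * pd g y i) x i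
          + (g x * pd (fun y => u y i) x i + u x i * pd g x i)) := by
        exact Finset.sum_congr rfl fun i _ => divB i
    _ = (∑ i, pd (fun y => D * 𝓜 y * pd g y i) x i)
          + g x * (∑ i, pd (fun y => u y i) x i) + ∑ i, u x i * pd g x i := by
        rw [Finset.sum_add_distrib, Finset.sum_add_distrib, ← Finset.mul_sum]; ring
    _ = (∑ i, pd (fun y => D * 𝓜 y * pd g y i) x i)
          + ∑ i, (D * pd 𝓜 x i - 𝓜 x * b x i) * pd g x i := by
        rw [hdivu]; simp [hu_def]
end
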